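/- (Weak-duality upper bound, Equation (4).) Let Ξ and Θ be measurable spaces, let Π be a probability measure on Θ, let {P_θ}_{θ∈Θ} be a measurable family of probability measures on Ξ, let f : Ξ → ℝ be bounded and measurable, and let ε ≥ 0. Then sup over probability measures Q on Ξ satisfying ∫ KL(Q ‖ P_θ) dΠ(θ) ≤ ε of ∫ f dQ is at most inf over γ > 0 of γε + γ ∫ log ∫ exp(f(ξ)/γ) dP_θ(ξ) dΠ(θ). -/
import Mathlib


open MeasureTheory ProbabilityTheory Real
open scoped ENNReal NNReal Classical

/-- Kullback-Leibler divergence: `∫ log (dQ/dP) dQ` when `Q ≪ P` and the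
log-likelihood ratio is integrable, `+∞` otherwise. -/
noncomputable def klDiv {Ω : Type*} [MeasurableSpace Ω] (Q P : Measure Ω) : ℝ≥0∞ :=
  if Q ≪ P ∧ Integrable (fun x => Real.log (Q.rnDeriv P x).toReal) Q
  then ENNReal.ofReal (∫ x, Real.log (Q.rnDeriv P x).toReal ∂Q)
  else ⊤

/-- Integrability of bounded measurable functions against a finite measure. -/
lemma aux_integrable_of_bdd {α : Type*} [MeasurableSpace α] {μ : Measure α}
    [IsFiniteMeasure μ] {g : α → ℝ} (hg : Measurable g) {C : ℝ} (hC : ∀ x, |g x| ≤ C) :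
    Integrable g μ :=
  Integrable.mono' (integrable_const C) hg.aestronglyMeasurable
    (Filter.Eventually.of_forall fun x => by simpa [Real.norm_eq_abs] using hC x)

/-- Nonnegativity of relative entropy. -/
lemma aux_integral_llr_nonneg {α : Type*} [MeasurableSpace α] {μ ν : Measure α}
    [IsProbabilityMeasure μ] [IsProbabilityMeasure ν]
    (hμν : μ ≪ ν) (h_int : Integrable (llr μ ν) μ) :
    0 ≤ ∫ x, llr μ ν x ∂μ := by
  have h_exp : Integrable (fun x => Real.exp (- llr μ ν x)) μ :=
    (integrable_congr (exp_neg_llr hμν)).mpr Measure.integrable_toReal_rnDeriv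
  have hJ : Real.exp (∫ x, - llr μ ν x ∂μ) ≤ ∫ x, Real.exp (- llr μ ν x) ∂μ :=
    convexOn_exp.map_integral_le continuous_exp.continuousOn isClosed_univ
      (Filter.Eventually.of_forall fun x => Set.mem_univ _) h_int.neg h_exp
  have h1 : ∫ x, Real.exp (- llr μ ν x) ∂μ ≤ 1 := by
    rw [integral_congr_ae (exp_neg_llr hμν)]
    calc ∫ x, (ν.rnDeriv μ x).toReal ∂μ
        = ∫ x in Set.univ, (ν.rnDeriv μ x).toReal ∂μ := by rw [setIntegral_univ]
      _ ≤ (ν Set.univ).toReal := Measure.setIntegral_toReal_rnDeriv_le (measure_ne_top ν _)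
      _ = 1 := by simp
  have := hJ.trans h1
  rw [Real.exp_le_one_iff, integral_neg, neg_nonpos] at this
  exact this

/-- One half of the Donsker–Varadhan variational formula (Gibbs' inequality). -/
lemma aux_gibbs {α : Type*} [MeasurableSpace α] {μ ν : Measure α}
    [IsProbabilityMeasure μ] [IsProbabilityMeasure ν]
    (hμν : μ ≪ ν) (h_int : Integrable (llr μ ν) μ)
    {g : α → ℝ} (hg : Measurable g) {C : ℝ} (hC : ∀ x, |g x| ≤ C) :
    ∫ x, g x ∂μ ≤ ∫ x, llr μ ν x ∂μ + Real.log (∫ x, Real.exp (g x) ∂ν) := by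
  have hgμ : Integrable g μ := aux_integrable_of_bdd hg hC
  have hgν : Integrable (fun x => Real.exp (g x)) ν := by
    refine aux_integrable_of_bdd hg.exp (C := Real.exp C) fun x => ?_
    rw [abs_of_pos (Real.exp_pos _)]
    exact Real.exp_le_exp.mpr ((abs_le.mp (hC x)).2)
  haveI : IsProbabilityMeasure (ν.tilted g) := isProbabilityMeasure_tilted hgν
  have hμνg : μ ≪ ν.tilted g := hμν.trans (absolutelyContinuous_tilted hgν)
  have h_int_t : Integrable (llr μ (ν.tilted g)) μ :=
    integrable_llr_tilted_right hμν hgμ h_int hgν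
  have h_eq := integral_llr_tilted_right hμν hgμ hgν h_int
  have h_nonneg := aux_integral_llr_nonneg hμνg h_int_t
  linarith [h_eq ▸ h_nonneg]

/-- Weak duality: any feasible `Q` (probability measure whose expected KL to the
family is finite and at most `ε`) has objective value at most the dual objective
at any `γ > 0`; i.e. the sup over feasible `Q` is at most the inf over `γ > 0`. -/
theorem dro_bas_weak_duality_upper_bound
    {Ξ Θ : Type*} [MeasurableSpace Ξ] [MeasurableSpace Θ]
    (Prior : Measure Θ) [IsProbabilityMeasure Prior]
    (P : Θ → Measure Ξ) (hP_prob : ∀ θ, IsProbabilityMeasure (P θ))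
    (hP_meas : Measurable P)
    (f : Ξ → ℝ) (hf_meas : Measurable f) (hf_bdd : ∃ C : ℝ, ∀ x, |f x| ≤ C)
    (ε : ℝ) (hε : 0 ≤ ε) :
    ∀ Q : Measure Ξ, IsProbabilityMeasure Q →
      (∫⁻ θ, klDiv Q (P θ) ∂Prior) ≤ ENNReal.ofReal ε →
      ∀ γ : ℝ, 0 < γ →
        ∫ ξ, f ξ ∂Q
          ≤ γ * ε + γ * ∫ θ, Real.log (∫ ξ, Real.exp (f ξ / γ) ∂(P θ)) ∂Prior := by
  intro Q hQ hKL γ hγ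
  obtain ⟨C, hC⟩ := hf_bdd
  set g : Ξ → ℝ := fun ξ => f ξ / γ with hg_def
  have hg_meas : Measurable g := hf_meas.div_const γ
  set K : ℝ := C / γ with hK_def
  have hg_bdd : ∀ x, |g x| ≤ K := fun x => by
    rw [hg_def, hK_def, abs_div, abs_of_pos hγ]
    exact div_le_div_of_nonneg_right (hC x) hγ.le |>.trans_eq rfl
  -- the log-partition function
  set L : Θ → ℝ := fun θ => Real.log (∫ ξ, Real.exp (g ξ) ∂(P θ)) with hL_def
  have hexp_int : ∀ θ, Integrable (fun ξ => Real.exp (g ξ)) (P θ) := fun θ => by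
    haveI := hP_prob θ
    refine aux_integrable_of_bdd hg_meas.exp (C := Real.exp K) fun x => ?_
    rw [abs_of_pos (Real.exp_pos _)]
    exact Real.exp_le_exp.mpr ((abs_le.mp (hg_bdd x)).2)
  have hM_pos : ∀ θ, 0 < ∫ ξ, Real.exp (g ξ) ∂(P θ) := fun θ => by
    haveI := hP_prob θ
    exact integral_exp_pos (hexp_int θ)
  -- measurability of L
  have hL_meas : Measurable L := by
    have h1 : Measurable fun θ => ∫⁻ ξ, ENNReal.ofReal (Real.exp (g ξ)) ∂(P θ) :=
      (Measure.measurable_lintegral (hg_meas.exp.ennreal_ofReal)).comp hP_meas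
    have h2 : ∀ θ, ∫ ξ, Real.exp (g ξ) ∂(P θ)
        = (∫⁻ ξ, ENNReal.ofReal (Real.exp (g ξ)) ∂(P θ)).toReal := fun θ => by
      rw [integral_eq_lintegral_of_nonneg_ae
        (Filter.Eventually.of_forall fun x => (Real.exp_pos _).le)
        hg_meas.exp.aestronglyMeasurable]
    have : L = fun θ => Real.log ((∫⁻ ξ, ENNReal.ofReal (Real.exp (g ξ)) ∂(P θ)).toReal) := by
      funext θ; rw [hL_def]; simp only [h2 θ]
    rw [this]
    exact h1.ennreal_toReal.log
  have hL_bdd : ∀ θ, |L θ| ≤ K := fun θ => by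
    haveI := hP_prob θ
    rw [abs_le]
    constructor
    · rw [Real.le_log_iff_exp_le (hM_pos θ)]
      calc Real.exp (-K) = ∫ _, Real.exp (-K) ∂(P θ) := by simp
        _ ≤ ∫ ξ, Real.exp (g ξ) ∂(P θ) := by
            refine integral_mono (integrable_const _) (hexp_int θ) fun x => ?_
            exact Real.exp_le_exp.mpr ((abs_le.mp (hg_bdd x)).1)
    · rw [Real.log_le_iff_le_exp (hM_pos θ)]
      calc ∫ ξ, Real.exp (g ξ) ∂(P θ)
          ≤ ∫ _, Real.exp K ∂(P θ) := by
            refine integral_mono (hexp_int θ) (integrable_const _) fun x => ?_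
            exact Real.exp_le_exp.mpr ((abs_le.mp (hg_bdd x)).2)
        _ = Real.exp K := by simp
  have hL_int : Integrable L Prior := aux_integrable_of_bdd hL_meas hL_bdd
  set a : ℝ := ∫ ξ, g ξ ∂Q with ha_def
  -- pointwise bound via Gibbs' inequality
  have key : ∀ θ, ENNReal.ofReal (a - L θ) ≤ klDiv Q (P θ) := fun θ => by
    haveI := hP_prob θ
    by_cases h : Q ≪ P θ ∧ Integrable (fun x => Real.log (Q.rnDeriv (P θ) x).toReal) Q
    · rw [klDiv, if_pos h]
      refine ENNReal.ofReal_le_ofReal ?_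
      have := aux_gibbs h.1 h.2 hg_meas hg_bdd
      rw [hL_def]
      simp only [llr] at this ⊢
      linarith
    · rw [klDiv, if_neg h]; exact le_top
  have key2 : ∫⁻ θ, ENNReal.ofReal (a - L θ) ∂Prior ≤ ENNReal.ofReal ε :=
    le_trans (lintegral_mono key) hKL
  -- from the lintegral bound to a real bound
  have hmain : a - ∫ θ, L θ ∂Prior ≤ ε := by
    have e1 : a - ∫ θ, L θ ∂Prior = ∫ θ, (a - L θ) ∂Prior := by
      rw [integral_sub (integrable_const a) hL_int]; simp
    have e2 : ∫ θ, (a - L θ) ∂Prior ≤ ∫ θ, max (a - L θ) 0 ∂Prior :=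
      integral_mono ((integrable_const a).sub hL_int)
        ((integrable_const a).sub hL_int).pos_part (fun θ => le_max_left _ _)
    have e3 : ∫ θ, max (a - L θ) 0 ∂Prior
        = (∫⁻ θ, ENNReal.ofReal (a - L θ) ∂Prior).toReal := by
      have e3' := integral_eq_lintegral_of_nonneg_ae (μ := Prior)
        (f := fun θ => max (a - L θ) 0)
        (Filter.Eventually.of_forall fun θ => le_max_right _ _)
        ((measurable_const.sub hL_meas).max measurable_const).aestronglyMeasurable
      rw [e3']
      congr 1
      refine lintegral_congr fun θ => ?_
      show ENNReal.ofReal (max (a - L θ) 0) = ENNReal.ofReal (a - L θ)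
      rcases le_total (a - L θ) 0 with h | h
      · rw [max_eq_right h, ENNReal.ofReal_of_nonpos h, ENNReal.ofReal_zero]
      · rw [max_eq_left h]
    have e4 : (∫⁻ θ, ENNReal.ofReal (a - L θ) ∂Prior).toReal ≤ ε := by
      have := ENNReal.toReal_mono ENNReal.ofReal_ne_top key2
      rwa [ENNReal.toReal_ofReal hε] at this
    linarith [e1 ▸ (e2.trans (e3 ▸ e4))]
  -- conclude
  have ha : a = (∫ ξ, f ξ ∂Q) / γ := by
    rw [ha_def, hg_def, integral_div]
  rw [ha] at hmain
  have : (∫ ξ, f ξ ∂Q) / γ ≤ ε + ∫ θ, L θ ∂Prior := by linarith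
  have h2 := (div_le_iff₀ hγ).mp this
  calc ∫ ξ, f ξ ∂Q ≤ (ε + ∫ θ, L θ ∂Prior) * γ := h2
    _ = γ * ε + γ * ∫ θ, L θ ∂Prior := by ring
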